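/- Let ρ : Γ₂ → PSL(2,ℂ) be a non-elementary group homomorphism such that: ρ(a₁) and ρ(b₁) are loxodromic; the subgroup generated by ρ(a₁) and ρ(b₁) is non-elementary; ρ(a₁) does not send a fixed point of ρ(b₁) to the other; ρ(b₂) is loxodromic; ρ(a₂)⁻¹ρ(b₂)⁻¹ρ(a₂) = ρ(b₂); and ρ(b₂a₁⁻¹) interchanges the two fixed points of ρ(b₁). Then ρ is a pentagon representation, i.e. there exists a homomorphism ρ' : Γ → PSL(2,ℂ) with ρ' ∘ ι = ρ and ρ'(qᵢ) = 1 for exactly one index i ∈ {1,…,6}. -/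

import Mathlib

/- Common setup: PSL(2,ℂ), its action on ℙ¹(ℂ), loxodromic/parabolic/elliptic elements,
elementary subgroups, surface groups, the pentagon group Γ and the embedding ι. -/

noncomputable section

open Matrix

/-- `SL(2,ℂ)`. -/
abbrev SL2C : Type := Matrix.SpecialLinearGroup (Fin 2) ℂ

instance : TopologicalSpace SL2C := instTopologicalSpaceSubtype

/-- `PSL(2,ℂ)`, the quotient of `SL(2,ℂ)` by its center `{±I}`. -/
abbrev PSL2C : Type := SL2C ⧸ Subgroup.center SL2C

/-- The quotient map `SL(2,ℂ) → PSL(2,ℂ)`. -/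
def projPSL : SL2C →* PSL2C := QuotientGroup.mk' (Subgroup.center SL2C)

/-- The complex projective line `ℙ¹(ℂ)`. -/
abbrev P1 : Type := Projectivization ℂ (Fin 2 → ℂ)

/-- The square of the trace, well defined on `PSL(2,ℂ)`. -/
def trSq (g : PSL2C) : ℂ :=
  (Matrix.trace ((Quotient.out g : SL2C) : Matrix (Fin 2) (Fin 2) ℂ)) ^ 2

/-- `g` is loxodromic iff `tr² g` is not a real number in `[0,4]`. -/
def IsLoxodromic (g : PSL2C) : Prop := ¬ ∃ r : ℝ, 0 ≤ r ∧ r ≤ 4 ∧ trSq g = (r : ℂ)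

/-- `g` is parabolic iff `g ≠ 1` and `tr² g = 4`. -/
def IsParabolic (g : PSL2C) : Prop := g ≠ 1 ∧ trSq g = 4

/-- `g` is elliptic iff `g ≠ 1` and `tr² g` is a real number in `[0,4)`. -/
def IsElliptic (g : PSL2C) : Prop := g ≠ 1 ∧ ∃ r : ℝ, 0 ≤ r ∧ r < 4 ∧ trSq g = (r : ℂ)

lemma sl2_toLin'_injective (g : SL2C) :
    Function.Injective (Matrix.toLin' (g : Matrix (Fin 2) (Fin 2) ℂ)) := by
  intro v w h
  have h2 : Matrix.toLin' ((g⁻¹ : SL2C) : Matrix (Fin 2) (Fin 2) ℂ)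
      (Matrix.toLin' ((g : SL2C) : Matrix (Fin 2) (Fin 2) ℂ) v) =
      Matrix.toLin' ((g⁻¹ : SL2C) : Matrix (Fin 2) (Fin 2) ℂ)
      (Matrix.toLin' ((g : SL2C) : Matrix (Fin 2) (Fin 2) ℂ) w) := by rw [h]
  rwa [← Matrix.toLin'_mul_apply, ← Matrix.toLin'_mul_apply,
    ← Matrix.SpecialLinearGroup.coe_mul, inv_mul_cancel,
    Matrix.SpecialLinearGroup.coe_one, Matrix.toLin'_one, LinearMap.id_apply,
    LinearMap.id_apply] at h2

/-- The action of `PSL(2,ℂ)` on `ℙ¹(ℂ)` by Möbius transformations (independent of the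
choice of representative, since the center acts trivially on lines). -/
def pslAct (g : PSL2C) (x : P1) : P1 :=
  Projectivization.map (Matrix.toLin' ((Quotient.out g : SL2C) : Matrix (Fin 2) (Fin 2) ℂ))
    (sl2_toLin'_injective _) x

/-- A subgroup of `PSL(2,ℂ)` is elementary if it has a nonempty invariant subset of `ℙ¹(ℂ)`
with at most two elements, or its closure is compact. -/
def IsElementarySubgroup (G : Subgroup PSL2C) : Prop :=
  (∃ S : Set P1, S.Nonempty ∧ S.Finite ∧ S.ncard ≤ 2 ∧ ∀ g ∈ G, pslAct g '' S = S) ∨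
    IsCompact (closure (G : Set PSL2C))

/-- A homomorphism to `PSL(2,ℂ)` is non-elementary if its image is non-elementary. -/
def IsNonElem {H : Type*} [Group H] (ρ : H →* PSL2C) : Prop :=
  ¬ IsElementarySubgroup ρ.range

/-- `g` sends a fixed point of `h` to the other one. -/
def SendsFixedToOther (g h : PSL2C) : Prop :=
  ∃ p q : P1, p ≠ q ∧ pslAct h p = p ∧ pslAct h q = q ∧ (pslAct g p = q ∨ pslAct g q = p)

/-- `g` interchanges the two fixed points of `h`. -/
def InterchangesFixed (g h : PSL2C) : Prop :=
  ∃ p q : P1, p ≠ q ∧ pslAct h p = p ∧ pslAct h q = q ∧ pslAct g p = q ∧ pslAct g q = p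

/-- `PSL(2,ℝ)` as a subgroup of `PSL(2,ℂ)`: the image of `SL(2,ℝ)`. -/
def PSL2R : Subgroup PSL2C :=
  (projPSL.comp (Matrix.SpecialLinearGroup.map (n := Fin 2) Complex.ofRealHom)).range

/-- `γ₁, γ₂` generate a rank-two Schottky group: the induced map from the free group `F₂` is
injective, with discrete image, all of whose nontrivial elements are loxodromic. -/
def GeneratesSchottky (γ₁ γ₂ : PSL2C) : Prop :=
  Function.Injective (FreeGroup.lift ![γ₁, γ₂] : FreeGroup (Fin 2) →* PSL2C) ∧
    DiscreteTopology ((FreeGroup.lift ![γ₁, γ₂] : FreeGroup (Fin 2) →* PSL2C).range) ∧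
    ∀ g ∈ (FreeGroup.lift ![γ₁, γ₂] : FreeGroup (Fin 2) →* PSL2C).range, g ≠ 1 → IsLoxodromic g

/-- The commutator `[x,y] = y⁻¹x⁻¹yx` in a free group. -/
def commF {α : Type*} (x y : FreeGroup α) : FreeGroup α := y⁻¹ * x⁻¹ * y * x

/-- The surface relator `[a_g,b_g]⋯[a₁,b₁]`. -/
def surfaceRel (g : ℕ) : FreeGroup (Fin g × Bool) :=
  (((List.finRange g).reverse).map
    (fun i => commF (FreeGroup.of (i, false)) (FreeGroup.of (i, true)))).prod

/-- The genus-`g` surface group `Γ_g`. -/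
abbrev SurfaceGroup (g : ℕ) : Type :=
  PresentedGroup ({surfaceRel g} : Set (FreeGroup (Fin g × Bool)))

/-- The generator `a_{i+1}` of `Γ_g`. -/
def sgA (g : ℕ) (i : Fin g) : SurfaceGroup g := PresentedGroup.of (i, false)

/-- The generator `b_{i+1}` of `Γ_g`. -/
def sgB (g : ℕ) (i : Fin g) : SurfaceGroup g := PresentedGroup.of (i, true)

/-- The genus-2 surface group `Γ₂`. -/
abbrev Gamma2 : Type := SurfaceGroup 2
def a1 : Gamma2 := sgA 2 0
def b1 : Gamma2 := sgB 2 0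
def a2 : Gamma2 := sgA 2 1
def b2 : Gamma2 := sgB 2 1

/-- Relations for the group `Γ = ⟨q₁,…,q₆ ∣ qᵢ² = 1, q₁q₂q₃q₄q₅q₆ = 1⟩`. -/
def pentagonRels : Set (FreeGroup (Fin 6)) :=
  (Set.range fun i : Fin 6 => FreeGroup.of i * FreeGroup.of i) ∪
    {((List.finRange 6).map FreeGroup.of).prod}

/-- The group `Γ = ⟨q₁,…,q₆ ∣ qᵢ² = 1, q₁q₂q₃q₄q₅q₆ = 1⟩`. -/
abbrev GammaP : Type := PresentedGroup pentagonRels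

/-- The generator `q_{i+1}` of `Γ`. -/
def qgen (i : Fin 6) : GammaP := PresentedGroup.of i

lemma qgen_mul_self (i : Fin 6) : qgen i * qgen i = 1 := by
  have hmem : FreeGroup.of i * FreeGroup.of i ∈ pentagonRels :=
    Set.mem_union_left _ ⟨i, rfl⟩
  have h : (PresentedGroup.mk pentagonRels (FreeGroup.of i * FreeGroup.of i)) = 1 :=
    (QuotientGroup.eq_one_iff _).mpr (Subgroup.subset_normalClosure hmem)
  rw [_root_.map_mul] at h
  exact h

lemma qgen_prod : qgen 0 * (qgen 1 * (qgen 2 * (qgen 3 * (qgen 4 * qgen 5)))) = 1 := by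
  have hmem : ((List.finRange 6).map FreeGroup.of).prod ∈ pentagonRels :=
    Set.mem_union_right _ rfl
  have h : (PresentedGroup.mk pentagonRels (((List.finRange 6).map FreeGroup.of).prod)) = 1 :=
    (QuotientGroup.eq_one_iff _).mpr (Subgroup.subset_normalClosure hmem)
  have h6 : List.finRange 6 = [0, 1, 2, 3, 4, 5] := by decide
  rw [h6] at h
  simpa [mul_assoc, qgen, PresentedGroup.of] using h

lemma pent_helper {G : Type*} [Group G] (x : Fin 6 → G) (hx : ∀ i, x i * x i = 1)
    (hp : x 0 * (x 1 * (x 2 * (x 3 * (x 4 * x 5)))) = 1) :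
    (x 4 * x 5)⁻¹ * (x 4 * x 3)⁻¹ * (x 4 * x 5) * (x 4 * x 3) *
      ((x 1 * x 2)⁻¹ * (x 1 * x 0)⁻¹ * (x 1 * x 2) * (x 1 * x 0)) = 1 := by
  have hinv : ∀ i, (x i)⁻¹ = x i := fun i => inv_eq_of_mul_eq_one_right (hx i)
  have hrev : x 5 * (x 4 * (x 3 * (x 2 * (x 1 * x 0)))) = 1 := by
    have h := congrArg (·⁻¹) hp
    simpa [_root_.mul_inv_rev, hinv, mul_assoc] using h
  have key : ∀ (i : Fin 6) (t : G), x i * (x i * t) = t := fun i t => by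
    rw [← mul_assoc, hx, one_mul]
  have key2 : ∀ t : G, x 5 * (x 4 * (x 3 * (x 2 * (x 1 * (x 0 * t))))) = t := fun t => by
    calc x 5 * (x 4 * (x 3 * (x 2 * (x 1 * (x 0 * t)))))
        = (x 5 * (x 4 * (x 3 * (x 2 * (x 1 * x 0))))) * t := by simp [mul_assoc]
      _ = t := by rw [hrev, one_mul]
  simp only [_root_.mul_inv_rev, hinv, mul_assoc]
  simp only [key, key2]
  exact hrev

/-- The images of the generators `a₁, b₁, a₂, b₂` under `ι`. -/
def pentMap : Fin 2 × Bool → GammaP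
  | (0, false) => qgen 1 * qgen 0
  | (0, true) => qgen 1 * qgen 2
  | (1, false) => qgen 4 * qgen 3
  | (1, true) => qgen 4 * qgen 5

lemma surfaceRel_two :
    surfaceRel 2 = commF (FreeGroup.of ((1 : Fin 2), false)) (FreeGroup.of ((1 : Fin 2), true)) *
      commF (FreeGroup.of ((0 : Fin 2), false)) (FreeGroup.of ((0 : Fin 2), true)) := by
  have h : List.finRange 2 = [0, 1] := by decide
  simp [surfaceRel, h]

/-- The embedding `ι : Γ₂ → Γ`, `a₁ ↦ q₂q₁`, `b₁ ↦ q₂q₃`, `a₂ ↦ q₅q₄`, `b₂ ↦ q₅q₆`. -/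
def iota : Gamma2 →* GammaP :=
  PresentedGroup.toGroup (f := pentMap) (by
    intro r hr
    rw [Set.mem_singleton_iff] at hr
    subst hr
    rw [surfaceRel_two]
    simp only [commF, _root_.map_mul, _root_.map_inv, FreeGroup.lift_apply_of]
    have h01 : pentMap ((0 : Fin 2), false) = qgen 1 * qgen 0 := rfl
    have h02 : pentMap ((0 : Fin 2), true) = qgen 1 * qgen 2 := rfl
    have h11 : pentMap ((1 : Fin 2), false) = qgen 4 * qgen 3 := rfl
    have h12 : pentMap ((1 : Fin 2), true) = qgen 4 * qgen 5 := rfl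
    rw [h01, h02, h11, h12]
    exact pent_helper (fun i => qgen i) qgen_mul_self qgen_prod)

/-- A pentagon representation: a non-elementary `ρ : Γ₂ → PSL(2,ℂ)` extending to `Γ` with
exactly one `qᵢ` killed. -/
def IsPentagonRep (ρ : Gamma2 →* PSL2C) : Prop :=
  IsNonElem ρ ∧ ∃ ρ' : GammaP →* PSL2C, ρ'.comp iota = ρ ∧ ∃! i : Fin 6, ρ' (qgen i) = 1

/-- A primitive element of the free group `F₂`: part of a free basis. -/
def IsPrimitiveF2 (γ : FreeGroup (Fin 2)) : Prop :=
  ∃ φ : MulAut (FreeGroup (Fin 2)), φ (FreeGroup.of 0) = γ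

/-- `pp` and `pm` are the attracting resp. repelling fixed points of `α`: for a representative
`A ∈ SL(2,ℂ)` with eigenvalues `l, l⁻¹`, `|l| > 1`, they are the corresponding eigenlines. -/
def IsAttrRep (α : PSL2C) (pp pm : P1) : Prop :=
  ∃ A : SL2C, projPSL A = α ∧ ∃ l : ℂ, 1 < ‖l‖ ∧
    ∃ (v w : Fin 2 → ℂ) (hv : v ≠ 0) (hw : w ≠ 0),
      (A : Matrix (Fin 2) (Fin 2) ℂ) *ᵥ v = l • v ∧
      (A : Matrix (Fin 2) (Fin 2) ℂ) *ᵥ w = l⁻¹ • w ∧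
      pp = Projectivization.mk ℂ v hv ∧ pm = Projectivization.mk ℂ w hw

/-! ### Auxiliary machinery for the proof -/

section Helpers

open Projectivization

local notation "M2" => Matrix (Fin 2) (Fin 2) ℂ

/-- `-1` as an element of `SL(2,ℂ)`. -/
def negSL : SL2C := ⟨-1, by simp [Matrix.det_neg]⟩

lemma negSL_center : negSL ∈ Subgroup.center SL2C := by
  refine Subgroup.mem_center_iff.mpr fun g => ?_
  ext i j
  rw [Matrix.SpecialLinearGroup.coe_mul, Matrix.SpecialLinearGroup.coe_mul]
  simp [negSL]

lemma projPSL_negSL : projPSL negSL = 1 :=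
  (QuotientGroup.eq_one_iff _).mpr negSL_center

lemma projPSL_out (g : PSL2C) : projPSL (Quotient.out g) = g :=
  Quotient.out_eq g

lemma center_pm (z : SL2C) (hz : z ∈ Subgroup.center SL2C) :
    (z : M2) = 1 ∨ (z : M2) = -1 := by
  obtain ⟨r, hr, hrs⟩ := Matrix.SpecialLinearGroup.mem_center_iff.mp hz
  have hr2 : r ^ 2 = 1 := by simpa using hr
  have hcases : r = 1 ∨ r = -1 := by
    have : (r - 1) * (r + 1) = 0 := by ring_nf; linear_combination hr2
    rcases mul_eq_zero.mp this with h | h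
    · left; linear_combination h
    · right; linear_combination h
  rcases hcases with h | h
  · left; rw [← hrs, h]; ext i j; simp [Matrix.scalar_apply, Matrix.one_apply, Matrix.diagonal]
  · right; rw [← hrs, h]; ext i j
    simp only [Matrix.scalar_apply, Matrix.diagonal_apply, Matrix.neg_apply, Matrix.one_apply]
    split <;> simp

lemma rep_sign {X Y : SL2C} (h : projPSL X = projPSL Y) :
    (X : M2) = (Y : M2) ∨ (X : M2) = -(Y : M2) := by
  have hz : Y⁻¹ * X ∈ Subgroup.center SL2C := by
    have : projPSL (Y⁻¹ * X) = 1 := by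
      rw [_root_.map_mul, _root_.map_inv, h, inv_mul_cancel]
    exact (QuotientGroup.eq_one_iff _).mp this
  have hY : X = Y * (Y⁻¹ * X) := by group
  rcases center_pm _ hz with h1 | h1
  · left
    calc (X : M2) = ((Y * (Y⁻¹ * X) : SL2C) : M2) := by rw [← hY]
    _ = (Y : M2) * ((Y⁻¹ * X : SL2C) : M2) := by rw [Matrix.SpecialLinearGroup.coe_mul]
    _ = (Y : M2) := by rw [h1, mul_one]
  · right
    calc (X : M2) = ((Y * (Y⁻¹ * X) : SL2C) : M2) := by rw [← hY]
    _ = (Y : M2) * ((Y⁻¹ * X : SL2C) : M2) := by rw [Matrix.SpecialLinearGroup.coe_mul]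
    _ = -(Y : M2) := by rw [h1]; simp

lemma mulVec_ne_zero (N : SL2C) {v : Fin 2 → ℂ} (hv : v ≠ 0) : (N : M2) *ᵥ v ≠ 0 := by
  intro h
  apply hv
  have : ((N⁻¹ * N : SL2C) : M2) *ᵥ v = v := by
    rw [inv_mul_cancel, Matrix.SpecialLinearGroup.coe_one, Matrix.one_mulVec]
  rw [Matrix.SpecialLinearGroup.coe_mul, ← Matrix.mulVec_mulVec, h, Matrix.mulVec_zero] at this
  exact this.symm

lemma pslAct_mk {g : PSL2C} {N : SL2C} (h : projPSL N = g) (v : Fin 2 → ℂ) (hv : v ≠ 0) :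
    pslAct g (Projectivization.mk ℂ v hv) =
      Projectivization.mk ℂ ((N : M2) *ᵥ v) (mulVec_ne_zero N hv) := by
  have hsign := rep_sign ((projPSL_out g).trans h.symm)
  rw [pslAct, Projectivization.map_mk]
  rcases hsign with h1 | h1
  · apply (Projectivization.mk_eq_mk_iff ℂ _ _ _ _).mpr
    refine ⟨1, ?_⟩
    simp [Matrix.toLin'_apply, h1]
  · apply (Projectivization.mk_eq_mk_iff ℂ _ _ _ _).mpr
    refine ⟨-1, ?_⟩
    simp [Matrix.toLin'_apply, h1, Matrix.neg_mulVec]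
    constructor <;> ring

lemma pslAct_mul (g h : PSL2C) (x : P1) :
    pslAct (g * h) x = pslAct g (pslAct h x) := by
  induction x using Projectivization.ind with
  | h v hv =>
    rw [pslAct_mk (N := Quotient.out h) (projPSL_out h) v hv,
      pslAct_mk (N := Quotient.out g) (projPSL_out g),
      pslAct_mk (N := Quotient.out g * Quotient.out h)
        (by rw [_root_.map_mul, projPSL_out, projPSL_out]) v hv]
    apply (Projectivization.mk_eq_mk_iff ℂ _ _ _ _).mpr
    refine ⟨1, ?_⟩
    simp [Matrix.SpecialLinearGroup.coe_mul, Matrix.mulVec_mulVec]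
    simp only [Matrix.mul_apply, Fin.sum_univ_two]
    constructor <;> ring

lemma pslAct_one (x : P1) : pslAct 1 x = x := by
  induction x using Projectivization.ind with
  | h v hv =>
    rw [pslAct_mk (N := 1) (map_one projPSL) v hv]
    apply (Projectivization.mk_eq_mk_iff ℂ _ _ _ _).mpr
    exact ⟨1, by simp⟩

lemma pslAct_inv_fixed {g : PSL2C} {x : P1} (h : pslAct g x = x) : pslAct g⁻¹ x = x := by
  conv_lhs => rw [← h]
  rw [← pslAct_mul, inv_mul_cancel, pslAct_one]

lemma det_mul_d (M : M2) (v w : Fin 2 → ℂ) :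
    M.det * (v 0 * w 1 - v 1 * w 0) =
      (M *ᵥ v) 0 * (M *ᵥ w) 1 - (M *ᵥ v) 1 * (M *ᵥ w) 0 := by
  simp [Matrix.det_fin_two, Matrix.mulVec, dotProduct, Fin.sum_univ_two]
  ring

lemma eq_of_mulVec_pair {X Y : M2} {v w : Fin 2 → ℂ}
    (hd : v 0 * w 1 - v 1 * w 0 ≠ 0)
    (h1 : X *ᵥ v = Y *ᵥ v) (h2 : X *ᵥ w = Y *ᵥ w) : X = Y := by
  ext i j
  have e1 := congrFun h1 i
  have e2 := congrFun h2 i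
  simp only [Matrix.mulVec, dotProduct, Fin.sum_univ_two] at e1 e2
  fin_cases j
  · have h3 : (X i 0 - Y i 0) * (v 0 * w 1 - v 1 * w 0) = 0 := by
      linear_combination w 1 * e1 - v 1 * e2
    rcases mul_eq_zero.mp h3 with h | h
    · simpa [sub_eq_zero] using h
    · exact absurd h hd
  · have h3 : (X i 1 - Y i 1) * (v 0 * w 1 - v 1 * w 0) = 0 := by
      linear_combination v 0 * e2 - w 0 * e1
    rcases mul_eq_zero.mp h3 with h | h
    · simpa [sub_eq_zero] using h
    · exact absurd h hd

lemma vec2_ne_zero_iff {v : Fin 2 → ℂ} : v ≠ 0 ↔ v 0 ≠ 0 ∨ v 1 ≠ 0 := by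
  constructor
  · intro h
    by_contra hc
    push_neg at hc
    exact h (funext fun i => by fin_cases i <;> simp [hc.1, hc.2])
  · rintro (h | h) hc <;> simp [hc] at h

lemma mk_eq_mk_of_d_eq_zero {v w : Fin 2 → ℂ} (hv : v ≠ 0) (hw : w ≠ 0)
    (hd : v 0 * w 1 - v 1 * w 0 = 0) :
    Projectivization.mk ℂ v hv = Projectivization.mk ℂ w hw := by
  apply (Projectivization.mk_eq_mk_iff' ℂ _ _ _ _).mpr
  rcases vec2_ne_zero_iff.mp hv with h0 | h1
  · have hw0 : w 0 ≠ 0 := by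
      intro hw0
      have hw1 : w 1 = 0 := by
        have := hd; rw [hw0] at this
        have h' : v 0 * w 1 = 0 := by linear_combination this
        exact (mul_eq_zero.mp h').resolve_left h0
      exact hw (funext fun i => by fin_cases i <;> simp [hw0, hw1])
    refine ⟨v 0 / w 0, funext fun i => ?_⟩
    fin_cases i
    · show v 0 / w 0 * w 0 = v 0
      field_simp
    · show v 0 / w 0 * w 1 = v 1
      rw [div_mul_eq_mul_div, div_eq_iff hw0]
      linear_combination hd
  · have hw1 : w 1 ≠ 0 := by
      intro hw1
      have hw0 : w 0 = 0 := by
        have := hd; rw [hw1] at this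
        have h' : v 1 * w 0 = 0 := by linear_combination -this
        exact (mul_eq_zero.mp h').resolve_left h1
      exact hw (funext fun i => by fin_cases i <;> simp [hw0, hw1])
    refine ⟨v 1 / w 1, funext fun i => ?_⟩
    fin_cases i
    · show v 1 / w 1 * w 0 = v 0
      rw [div_mul_eq_mul_div, div_eq_iff hw1]
      linear_combination -hd
    · show v 1 / w 1 * w 1 = v 1
      field_simp

lemma det_singular {K : M2} {x : Fin 2 → ℂ} (hx : x ≠ 0) (h : K *ᵥ x = 0) : K.det = 0 := by
  have e0 := congrFun h 0
  have e1 := congrFun h 1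
  simp only [Matrix.mulVec, dotProduct, Fin.sum_univ_two, Pi.zero_apply] at e0 e1
  rcases vec2_ne_zero_iff.mp hx with h0 | h1
  · have : K.det * x 0 = 0 := by
      rw [Matrix.det_fin_two]
      linear_combination K 1 1 * e0 - K 0 1 * e1
    exact (mul_eq_zero.mp this).resolve_right h0
  · have : K.det * x 1 = 0 := by
      rw [Matrix.det_fin_two]
      linear_combination K 0 0 * e1 - K 1 0 * e0
    exact (mul_eq_zero.mp this).resolve_right h1

lemma eigen_pair_det (N : SL2C) {v w : Fin 2 → ℂ} {a b : ℂ}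
    (hd : v 0 * w 1 - v 1 * w 0 ≠ 0)
    (hv : (N : M2) *ᵥ v = a • v) (hw : (N : M2) *ᵥ w = b • w) : a * b = 1 := by
  have h := det_mul_d (N : M2) v w
  rw [hv, hw, N.prop] at h
  simp only [Pi.smul_apply, smul_eq_mul] at h
  have h2 : (a * b - 1) * (v 0 * w 1 - v 1 * w 0) = 0 := by linear_combination -h
  rcases mul_eq_zero.mp h2 with h' | h'
  · linear_combination h'
  · exact absurd h' hd

lemma swap_pair_st (N : SL2C) {v w : Fin 2 → ℂ} {s t : ℂ}
    (hd : v 0 * w 1 - v 1 * w 0 ≠ 0)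
    (hv : (N : M2) *ᵥ v = s • w) (hw : (N : M2) *ᵥ w = t • v) : s * t = -1 := by
  have h := det_mul_d (N : M2) v w
  rw [hv, hw, N.prop] at h
  simp only [Pi.smul_apply, smul_eq_mul] at h
  have h2 : (s * t + 1) * (v 0 * w 1 - v 1 * w 0) = 0 := by linear_combination h
  rcases mul_eq_zero.mp h2 with h' | h'
  · linear_combination h'
  · exact absurd h' hd

lemma swap_pair_sq (N : SL2C) {v w : Fin 2 → ℂ} {s t : ℂ}
    (hd : v 0 * w 1 - v 1 * w 0 ≠ 0)
    (hv : (N : M2) *ᵥ v = s • w) (hw : (N : M2) *ᵥ w = t • v) :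
    projPSL N * projPSL N = 1 := by
  have hst := swap_pair_st N hd hv hw
  have hsq : ((N * N : SL2C) : M2) = ((-1 : ℂ) • (1 : M2)) := by
    apply eq_of_mulVec_pair hd
    · rw [Matrix.SpecialLinearGroup.coe_mul, ← Matrix.mulVec_mulVec, hv, Matrix.mulVec_smul, hw,
        Matrix.smul_mulVec, Matrix.one_mulVec, smul_smul, hst]
    · rw [Matrix.SpecialLinearGroup.coe_mul, ← Matrix.mulVec_mulVec, hw, Matrix.mulVec_smul, hv,
        Matrix.smul_mulVec, Matrix.one_mulVec, smul_smul, mul_comm t s, hst]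
  have : N * N = negSL := by
    apply Subtype.ext
    rw [hsq]
    simp [negSL]
  rw [← _root_.map_mul, this, projPSL_negSL]

lemma conj_swap (N M : SL2C) {v w : Fin 2 → ℂ} {s t a b : ℂ}
    (hd : v 0 * w 1 - v 1 * w 0 ≠ 0)
    (hNv : (N : M2) *ᵥ v = s • w) (hNw : (N : M2) *ᵥ w = t • v)
    (hMv : (M : M2) *ᵥ v = a • v) (hMw : (M : M2) *ᵥ w = b • w) :
    projPSL N * projPSL M * projPSL N = (projPSL M)⁻¹ := by
  have hab : a * b = 1 := eigen_pair_det M hd hMv hMw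
  have hst : s * t = -1 := swap_pair_st N hd hNv hNw
  have ha : a ≠ 0 := fun h => by simp [h] at hab
  have hb : b ≠ 0 := fun h => by simp [h] at hab
  have hMinv_v : ((M⁻¹ : SL2C) : M2) *ᵥ v = b • v := by
    have h1 : ((M⁻¹ : SL2C) : M2) *ᵥ ((M : M2) *ᵥ v) = v := by
      rw [Matrix.mulVec_mulVec, ← Matrix.SpecialLinearGroup.coe_mul, inv_mul_cancel,
        Matrix.SpecialLinearGroup.coe_one, Matrix.one_mulVec]
    rw [hMv, Matrix.mulVec_smul] at h1
    have h2 : ((M⁻¹ : SL2C) : M2) *ᵥ v = a⁻¹ • v := by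
      have := congrArg (fun z => a⁻¹ • z) h1
      simpa only [smul_smul, inv_mul_cancel₀ ha, one_smul] using this
    rw [h2]
    congr 1
    field_simp
    linear_combination -hab
  have hMinv_w : ((M⁻¹ : SL2C) : M2) *ᵥ w = a • w := by
    have h1 : ((M⁻¹ : SL2C) : M2) *ᵥ ((M : M2) *ᵥ w) = w := by
      rw [Matrix.mulVec_mulVec, ← Matrix.SpecialLinearGroup.coe_mul, inv_mul_cancel,
        Matrix.SpecialLinearGroup.coe_one, Matrix.one_mulVec]
    rw [hMw, Matrix.mulVec_smul] at h1
    have h2 : ((M⁻¹ : SL2C) : M2) *ᵥ w = b⁻¹ • w := by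
      have := congrArg (fun z => b⁻¹ • z) h1
      simpa only [smul_smul, inv_mul_cancel₀ hb, one_smul] using this
    rw [h2]
    congr 1
    field_simp
    linear_combination -hab
  have key : ((N * M * N : SL2C) : M2) = ((negSL * M⁻¹ : SL2C) : M2) := by
    apply eq_of_mulVec_pair hd
    · rw [Matrix.SpecialLinearGroup.coe_mul, Matrix.SpecialLinearGroup.coe_mul,
        ← Matrix.mulVec_mulVec, ← Matrix.mulVec_mulVec, hNv, Matrix.mulVec_smul, hMw,
        Matrix.mulVec_smul, Matrix.mulVec_smul, hNw]
      rw [Matrix.SpecialLinearGroup.coe_mul]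
      rw [← Matrix.mulVec_mulVec, hMinv_v]
      show s • b • t • v = ((negSL : SL2C) : M2) *ᵥ (b • v)
      rw [Matrix.mulVec_smul]
      show s • b • t • v = b • (((negSL : SL2C) : M2) *ᵥ v)
      have : ((negSL : SL2C) : M2) *ᵥ v = (-1 : ℂ) • v := by
        show ((-1 : M2)) *ᵥ v = (-1 : ℂ) • v
        rw [Matrix.neg_mulVec, Matrix.one_mulVec]; simp
      rw [this]
      simp only [smul_smul]
      congr 1
      linear_combination b * hst
    · rw [Matrix.SpecialLinearGroup.coe_mul, Matrix.SpecialLinearGroup.coe_mul,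
        ← Matrix.mulVec_mulVec, ← Matrix.mulVec_mulVec, hNw, Matrix.mulVec_smul, hMv,
        Matrix.mulVec_smul, Matrix.mulVec_smul, hNv]
      rw [Matrix.SpecialLinearGroup.coe_mul]
      rw [← Matrix.mulVec_mulVec, hMinv_w]
      show t • a • s • w = ((negSL : SL2C) : M2) *ᵥ (a • w)
      rw [Matrix.mulVec_smul]
      have : ((negSL : SL2C) : M2) *ᵥ w = (-1 : ℂ) • w := by
        show ((-1 : M2)) *ᵥ w = (-1 : ℂ) • w
        rw [Matrix.neg_mulVec, Matrix.one_mulVec]; simp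
      rw [this]
      simp only [smul_smul]
      congr 1
      linear_combination a * hst
  have keySL : N * M * N = negSL * M⁻¹ := Subtype.ext key
  calc projPSL N * projPSL M * projPSL N = projPSL (N * M * N) := by
        rw [_root_.map_mul, _root_.map_mul]
  _ = projPSL (negSL * M⁻¹) := by rw [keySL]
  _ = (projPSL M)⁻¹ := by rw [_root_.map_mul, projPSL_negSL, one_mul, _root_.map_inv]

lemma d_ne_zero_of_ne {p q : P1} (hpq : p ≠ q) :
    p.rep 0 * q.rep 1 - p.rep 1 * q.rep 0 ≠ 0 := by
  intro hd
  apply hpq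
  rw [← Projectivization.mk_rep p, ← Projectivization.mk_rep q]
  exact mk_eq_mk_of_d_eq_zero (Projectivization.rep_nonzero p) (Projectivization.rep_nonzero q) hd

lemma act_scalar {g : PSL2C} {N : SL2C} (hN : projPSL N = g) {v w : Fin 2 → ℂ}
    (hv : v ≠ 0) (hw : w ≠ 0)
    (h : pslAct g (Projectivization.mk ℂ v hv) = Projectivization.mk ℂ w hw) :
    ∃ c : ℂ, c ≠ 0 ∧ (N : M2) *ᵥ v = c • w := by
  rw [pslAct_mk hN v hv] at h
  obtain ⟨c, hc⟩ := (Projectivization.mk_eq_mk_iff ℂ _ _ _ _).mp h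
  exact ⟨(c : ℂ), c.ne_zero, by rw [← hc]; simp [Units.smul_def]⟩

lemma swap_fix {B J : PSL2C} {p q : P1} (hpq : p ≠ q)
    (hBp : pslAct B p = p) (hBq : pslAct B q = q)
    (hJp : pslAct J p = q) (hJq : pslAct J q = p) :
    J * J = 1 ∧ J * B * J = B⁻¹ := by
  have hd := d_ne_zero_of_ne hpq
  have hv : p.rep ≠ 0 := Projectivization.rep_nonzero p
  have hw : q.rep ≠ 0 := Projectivization.rep_nonzero q
  have hBp' : pslAct B (Projectivization.mk ℂ p.rep hv) = Projectivization.mk ℂ p.rep hv := by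
    rw [Projectivization.mk_rep]; exact hBp
  have hBq' : pslAct B (Projectivization.mk ℂ q.rep hw) = Projectivization.mk ℂ q.rep hw := by
    rw [Projectivization.mk_rep]; exact hBq
  have hJp' : pslAct J (Projectivization.mk ℂ p.rep hv) = Projectivization.mk ℂ q.rep hw := by
    rw [Projectivization.mk_rep, Projectivization.mk_rep]; exact hJp
  have hJq' : pslAct J (Projectivization.mk ℂ q.rep hw) = Projectivization.mk ℂ p.rep hv := by
    rw [Projectivization.mk_rep, Projectivization.mk_rep]; exact hJq
  obtain ⟨a, _, hA⟩ := act_scalar (projPSL_out B) hv hv hBp'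
  obtain ⟨b, _, hB⟩ := act_scalar (projPSL_out B) hw hw hBq'
  obtain ⟨s, _, hS⟩ := act_scalar (projPSL_out J) hv hw hJp'
  obtain ⟨t, _, hT⟩ := act_scalar (projPSL_out J) hw hv hJq'
  constructor
  · have := swap_pair_sq (Quotient.out J) hd hS hT
    rwa [projPSL_out] at this
  · have := conj_swap (Quotient.out J) (Quotient.out B) hd hS hT hA hB
    rwa [projPSL_out, projPSL_out] at this

lemma CH2 (M : SL2C) :
    (M : M2) * (M : M2) = Matrix.trace (M : M2) • (M : M2) - 1 := by
  have hdet : (M : M2) 0 0 * (M : M2) 1 1 - (M : M2) 0 1 * (M : M2) 1 0 = 1 := by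
    have := M.prop; rwa [Matrix.det_fin_two] at this
  ext i j
  fin_cases i <;> fin_cases j <;>
    simp [Matrix.mul_apply, Fin.sum_univ_two, Matrix.trace_fin_two, Matrix.sub_apply,
      Matrix.smul_apply, Matrix.one_apply, smul_eq_mul]
  · linear_combination -hdet
  · ring
  · ring
  · linear_combination -hdet

lemma not_lox_of_sq_eq_one {g : PSL2C} (h : g * g = 1) : ¬ IsLoxodromic g := by
  intro hl
  apply hl
  have hc : Quotient.out g * Quotient.out g ∈ Subgroup.center SL2C := by
    apply (QuotientGroup.eq_one_iff _).mp
    show projPSL (Quotient.out g * Quotient.out g) = 1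
    rw [_root_.map_mul, projPSL_out, h]
  have hCH := CH2 (Quotient.out g)
  have hMM : ((Quotient.out g : SL2C) : M2) * ((Quotient.out g : SL2C) : M2) =
      ((Quotient.out g * Quotient.out g : SL2C) : M2) :=
    (Matrix.SpecialLinearGroup.coe_mul _ _).symm
  set T : ℂ := Matrix.trace ((Quotient.out g : SL2C) : M2) with hT
  have htrSq : trSq g = T ^ 2 := by rw [trSq, hT]
  rcases center_pm _ hc with h1 | h1
  · have h2 : T • ((Quotient.out g : SL2C) : M2) - 1 = 1 := by rw [← hCH, hMM, h1]
    rw [sub_eq_iff_eq_add] at h2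
    have h4 := congrArg Matrix.trace h2
    simp [Matrix.trace_smul, Matrix.trace_add, Matrix.trace_one, smul_eq_mul] at h4
    refine ⟨4, by norm_num, by norm_num, ?_⟩
    rw [htrSq]; push_cast; linear_combination h4
  · have h2 : T • ((Quotient.out g : SL2C) : M2) - 1 = -1 := by rw [← hCH, hMM, h1]
    have h3 : T • ((Quotient.out g : SL2C) : M2) = 0 := by
      rw [sub_eq_iff_eq_add] at h2; simpa using h2
    have h4 := congrArg Matrix.trace h3
    simp [Matrix.trace_smul, Matrix.trace_zero, smul_eq_mul] at h4
    refine ⟨0, le_refl 0, by norm_num, ?_⟩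
    rw [htrSq]; push_cast
    rcases h4 with h4 | h4
    · rw [h4]; ring
    · rw [hT, h4]; ring

lemma eigvec (M : SL2C) {lam : ℂ} (hroot : lam ^ 2 - Matrix.trace (M : M2) * lam + 1 = 0)
    (h4 : Matrix.trace (M : M2) ^ 2 ≠ 4) :
    ∃ v : Fin 2 → ℂ, v ≠ 0 ∧ (M : M2) *ᵥ v = lam • v := by
  have hdet : (M : M2) 0 0 * (M : M2) 1 1 - (M : M2) 0 1 * (M : M2) 1 0 = 1 := by
    have := M.prop; rwa [Matrix.det_fin_two] at this
  have htr : Matrix.trace (M : M2) = (M : M2) 0 0 + (M : M2) 1 1 :=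
    Matrix.trace_fin_two _
  by_cases h01 : (M : M2) 0 1 ≠ 0 ∨ lam - (M : M2) 0 0 ≠ 0
  · refine ⟨![(M : M2) 0 1, lam - (M : M2) 0 0], ?_, ?_⟩
    · intro hz
      have h0 := congrFun hz 0
      have h1 := congrFun hz 1
      simp at h0 h1
      rcases h01 with h' | h'
      · exact h' h0
      · exact h' (by rw [sub_eq_zero]; exact sub_eq_zero.mp h1)
    · funext i
      fin_cases i <;>
        simp [Matrix.mulVec, dotProduct, Fin.sum_univ_two, smul_eq_mul]
      · ring
      · linear_combination -hroot - lam * htr - hdet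
  · push_neg at h01
    obtain ⟨ha01, hb⟩ := h01
    have ha00 : (M : M2) 0 0 = lam := (sub_eq_zero.mp hb).symm
    refine ⟨![lam - (M : M2) 1 1, (M : M2) 1 0], ?_, ?_⟩
    · intro hz
      have h0 := congrFun hz 0
      have h1 := congrFun hz 1
      simp at h0 h1
      have ha11 : (M : M2) 1 1 = lam := (sub_eq_zero.mp h0).symm
      apply h4
      have hdet' : lam * lam = 1 := by
        linear_combination hdet + (M : M2) 1 0 * ha01 - (M : M2) 1 1 * ha00 - lam * ha11
      rw [htr, ha00, ha11]
      linear_combination (4 : ℂ) * hdet'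
    · funext i
      fin_cases i <;>
        simp [Matrix.mulVec, dotProduct, Fin.sum_univ_two, smul_eq_mul]
      · linear_combination -hroot - lam * htr - hdet
      · ring

lemma eigenvalue_of (M : SL2C) {x : Fin 2 → ℂ} {c : ℂ} (hx : x ≠ 0)
    (h : (M : M2) *ᵥ x = c • x) :
    c ^ 2 - Matrix.trace (M : M2) * c + 1 = 0 := by
  have hK : ((M : M2) - c • 1) *ᵥ x = 0 := by
    rw [Matrix.sub_mulVec, h, Matrix.smul_mulVec, Matrix.one_mulVec, sub_self]
  have hdet0 := det_singular hx hK
  have hdet : (M : M2) 0 0 * (M : M2) 1 1 - (M : M2) 0 1 * (M : M2) 1 0 = 1 := by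
    have := M.prop; rwa [Matrix.det_fin_two] at this
  rw [Matrix.det_fin_two] at hdet0
  simp only [Matrix.sub_apply, Matrix.smul_apply, Matrix.one_apply, smul_eq_mul] at hdet0
  rw [Matrix.trace_fin_two]
  norm_num at hdet0
  linear_combination hdet0 - hdet

lemma parallel_of_eigen (M : SL2C) {v w x : Fin 2 → ℂ} {lam mu : ℂ} (hlm : lam ≠ mu)
    (hd : v 0 * w 1 - v 1 * w 0 ≠ 0)
    (hv : (M : M2) *ᵥ v = lam • v) (hw : (M : M2) *ᵥ w = mu • w)
    (hx : x ≠ 0) (hxe : (M : M2) *ᵥ x = mu • x) : ∃ sc : ℂ, sc ≠ 0 ∧ x = sc • w := by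
  have hvne : v ≠ 0 := by intro h; apply hd; simp [h]
  have hwne : w ≠ 0 := by intro h; apply hd; simp [h]
  by_cases hdx : x 0 * w 1 - x 1 * w 0 = 0
  · have hmk := mk_eq_mk_of_d_eq_zero hx hwne hdx
    obtain ⟨u, hu⟩ := (Projectivization.mk_eq_mk_iff ℂ _ _ _ _).mp hmk
    exact ⟨(u : ℂ), u.ne_zero, by rw [← hu]; simp [Units.smul_def]⟩
  · exfalso
    have hK : ((M : M2) - mu • 1) = 0 := by
      apply eq_of_mulVec_pair (v := x) (w := w) hdx (Y := 0)
      · rw [Matrix.sub_mulVec, hxe, Matrix.smul_mulVec, Matrix.one_mulVec, sub_self,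
          Matrix.zero_mulVec]
      · rw [Matrix.sub_mulVec, hw, Matrix.smul_mulVec, Matrix.one_mulVec, sub_self,
          Matrix.zero_mulVec]
    have hMs : (M : M2) = mu • 1 := sub_eq_zero.mp hK
    have h1 : (M : M2) *ᵥ v = mu • v := by
      rw [hMs, Matrix.smul_mulVec, Matrix.one_mulVec]
    rw [hv] at h1
    have h2 : (lam - mu) • v = 0 := by rw [sub_smul, h1, sub_self]
    rcases smul_eq_zero.mp h2 with h' | h'
    · exact hlm (by rwa [sub_eq_zero] at h')
    · exact hvne h'

lemma conj_inv_sq {A B : PSL2C} (hB : IsLoxodromic B) (h : A⁻¹ * B⁻¹ * A = B) :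
    A * A = 1 := by
  set M : SL2C := Quotient.out B with hMdef
  set NA : SL2C := Quotient.out A with hNAdef
  set T : ℂ := Matrix.trace (M : M2) with hT
  have htrSq : trSq B = T ^ 2 := by rw [trSq, hT]
  have h4 : T ^ 2 ≠ 4 := fun hc =>
    hB ⟨4, by norm_num, by norm_num, by rw [htrSq, hc]; norm_num⟩
  have h0 : T ^ 2 ≠ 0 := fun hc =>
    hB ⟨0, le_refl 0, by norm_num, by rw [htrSq, hc]; norm_num⟩
  obtain ⟨c, hc⟩ : ∃ c : ℂ, c ^ 2 = T ^ 2 - 4 := by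
    obtain ⟨c, hc⟩ := IsAlgClosed.exists_pow_nat_eq (k := ℂ) (T ^ 2 - 4) (n := 2) (by norm_num)
    exact ⟨c, hc⟩
  have hcc : c ≠ 0 := fun h' => h4 (by rw [h'] at hc; linear_combination -hc)
  set lam : ℂ := (T + c) / 2 with hlam
  set mu : ℂ := (T - c) / 2 with hmu
  have hlmul : lam * mu = 1 := by
    rw [hlam, hmu]; field_simp; linear_combination -hc
  have hlne : lam ≠ 0 := fun h' => by simp [h'] at hlmul
  have hmne : mu ≠ 0 := fun h' => by simp [h'] at hlmul
  have hroot_l : lam ^ 2 - T * lam + 1 = 0 := by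
    rw [hlam]; field_simp; linear_combination hc
  have hroot_m : mu ^ 2 - T * mu + 1 = 0 := by
    rw [hmu]; field_simp; linear_combination hc
  have hne : lam ≠ mu := by
    intro he
    apply hcc
    rw [hlam, hmu, div_eq_div_iff (by norm_num) (by norm_num)] at he
    linear_combination he / 4
  obtain ⟨v, hv0, hveig⟩ := eigvec M hroot_l h4
  obtain ⟨w, hw0, hweig⟩ := eigvec M hroot_m h4
  have hd : v 0 * w 1 - v 1 * w 0 ≠ 0 := by
    intro hd0
    have hmk := mk_eq_mk_of_d_eq_zero hv0 hw0 hd0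
    obtain ⟨u, hu⟩ := (Projectivization.mk_eq_mk_iff ℂ _ _ _ _).mp hmk
    have h1 : (M : M2) *ᵥ v = mu • v := by
      rw [← hu]
      show (M : M2) *ᵥ ((u : ℂ) • w) = mu • ((u : ℂ) • w)
      rw [Matrix.mulVec_smul, hweig, smul_smul, smul_smul, mul_comm]
    rw [hveig] at h1
    have h2 : (lam - mu) • v = 0 := by rw [sub_smul, h1, sub_self]
    rcases smul_eq_zero.mp h2 with h' | h'
    · exact hne (by rwa [sub_eq_zero] at h')
    · exact hv0 h'
  have hX : projPSL (NA⁻¹ * M⁻¹ * NA) = projPSL M := by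
    rw [_root_.map_mul, _root_.map_mul, _root_.map_inv, _root_.map_inv,
      projPSL_out, projPSL_out, h]
  have hSL : NA * (NA⁻¹ * M⁻¹ * NA) = M⁻¹ * NA := by group
  have hmatcoe : (NA : M2) * ((NA⁻¹ * M⁻¹ * NA : SL2C) : M2) = ((M⁻¹ : SL2C) : M2) * (NA : M2) := by
    rw [← Matrix.SpecialLinearGroup.coe_mul, hSL, Matrix.SpecialLinearGroup.coe_mul]
  have hMinv : ∀ (x : Fin 2 → ℂ) (l : ℂ), l ≠ 0 → (M : M2) *ᵥ x = l • x →
      ((M⁻¹ : SL2C) : M2) *ᵥ x = l⁻¹ • x := by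
    intro x l hl hx
    have h1 : ((M⁻¹ : SL2C) : M2) *ᵥ ((M : M2) *ᵥ x) = x := by
      rw [Matrix.mulVec_mulVec, ← Matrix.SpecialLinearGroup.coe_mul, inv_mul_cancel,
        Matrix.SpecialLinearGroup.coe_one, Matrix.one_mulVec]
    rw [hx, Matrix.mulVec_smul] at h1
    have := congrArg (fun z => l⁻¹ • z) h1
    simpa only [smul_smul, inv_mul_cancel₀ hl, one_smul] using this
  rcases rep_sign hX with hs | hs
  · -- X.1 = M.1 :  M⁻¹ NA = NA M
    have hrel : ((M⁻¹ : SL2C) : M2) * (NA : M2) = (NA : M2) * (M : M2) := by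
      rw [← hmatcoe, hs]
    have hyv : (M : M2) *ᵥ ((NA : M2) *ᵥ v) = mu • ((NA : M2) *ᵥ v) := by
      have h1 : ((M⁻¹ : SL2C) : M2) *ᵥ ((NA : M2) *ᵥ v) = lam • ((NA : M2) *ᵥ v) := by
        rw [Matrix.mulVec_mulVec, hrel, ← Matrix.mulVec_mulVec, hveig, Matrix.mulVec_smul]
      have h2 : (M : M2) *ᵥ (((M⁻¹ : SL2C) : M2) *ᵥ ((NA : M2) *ᵥ v)) = (NA : M2) *ᵥ v := by
        rw [Matrix.mulVec_mulVec, ← Matrix.SpecialLinearGroup.coe_mul, mul_inv_cancel,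
          Matrix.SpecialLinearGroup.coe_one, Matrix.one_mulVec]
      rw [h1, Matrix.mulVec_smul] at h2
      have h3 := congrArg (fun z => lam⁻¹ • z) h2
      simp only [smul_smul, inv_mul_cancel₀ hlne, one_smul] at h3
      rw [h3]
      congr 1
      field_simp
      linear_combination -hlmul
    have hyw : (M : M2) *ᵥ ((NA : M2) *ᵥ w) = lam • ((NA : M2) *ᵥ w) := by
      have h1 : ((M⁻¹ : SL2C) : M2) *ᵥ ((NA : M2) *ᵥ w) = mu • ((NA : M2) *ᵥ w) := by
        rw [Matrix.mulVec_mulVec, hrel, ← Matrix.mulVec_mulVec, hweig, Matrix.mulVec_smul]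
      have h2 : (M : M2) *ᵥ (((M⁻¹ : SL2C) : M2) *ᵥ ((NA : M2) *ᵥ w)) = (NA : M2) *ᵥ w := by
        rw [Matrix.mulVec_mulVec, ← Matrix.SpecialLinearGroup.coe_mul, mul_inv_cancel,
          Matrix.SpecialLinearGroup.coe_one, Matrix.one_mulVec]
      rw [h1, Matrix.mulVec_smul] at h2
      have h3 := congrArg (fun z => mu⁻¹ • z) h2
      simp only [smul_smul, inv_mul_cancel₀ hmne, one_smul] at h3
      rw [h3]
      congr 1
      field_simp
      linear_combination -hlmul
    obtain ⟨s, hs0, hsv⟩ := parallel_of_eigen M hne hd hveig hweig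
      (mulVec_ne_zero NA hv0) hyv
    obtain ⟨t, ht0, htw⟩ := parallel_of_eigen M (Ne.symm hne)
      (by intro h'; apply hd; linear_combination -h') hweig hveig
      (mulVec_ne_zero NA hw0) hyw
    have hNv : (NA : M2) *ᵥ v = s • w := hsv
    have hNw : (NA : M2) *ᵥ w = t • v := htw
    have := swap_pair_sq NA hd hNv hNw
    rwa [projPSL_out] at this
  · -- X.1 = -M.1 : leads to contradiction
    exfalso
    have hrel : ((M⁻¹ : SL2C) : M2) * (NA : M2) = (NA : M2) * (-(M : M2)) := by
      rw [← hmatcoe, hs]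
    have hnlam : (-lam : ℂ) ≠ 0 := by simpa using hlne
    have hyv : (M : M2) *ᵥ ((NA : M2) *ᵥ v) = (-lam)⁻¹ • ((NA : M2) *ᵥ v) := by
      have h1 : ((M⁻¹ : SL2C) : M2) *ᵥ ((NA : M2) *ᵥ v) = (-lam) • ((NA : M2) *ᵥ v) := by
        rw [Matrix.mulVec_mulVec, hrel, ← Matrix.mulVec_mulVec, Matrix.neg_mulVec, hveig,
          ← neg_smul, Matrix.mulVec_smul]
      have h2 : (M : M2) *ᵥ (((M⁻¹ : SL2C) : M2) *ᵥ ((NA : M2) *ᵥ v)) = (NA : M2) *ᵥ v := by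
        rw [Matrix.mulVec_mulVec, ← Matrix.SpecialLinearGroup.coe_mul, mul_inv_cancel,
          Matrix.SpecialLinearGroup.coe_one, Matrix.one_mulVec]
      rw [h1, Matrix.mulVec_smul] at h2
      have h3 := congrArg (fun z => (-lam)⁻¹ • z) h2
      simp only [smul_smul, inv_mul_cancel₀ hnlam, one_smul] at h3
      exact h3
    have hcval : (-lam)⁻¹ = -mu :=
      inv_eq_of_mul_eq_one_right (by linear_combination hlmul)
    rw [hcval] at hyv
    have ev := eigenvalue_of M (mulVec_ne_zero NA hv0) hyv
    have hTmu : T * mu * 2 = 0 := by linear_combination ev - hroot_m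
    rcases mul_eq_zero.mp hTmu with h' | h'
    · rcases mul_eq_zero.mp h' with h'' | h''
      · exact h0 (by rw [sq, h'', mul_zero])
      · exact hmne h''
    · norm_num at h'

lemma pentagon_alg {G : Type*} [Group G] (A1 B1 A2 B2 J : G)
    (hJ : J = B2 * A1⁻¹) (hJ2 : J * J = 1) (hJBJ : J * B1 * J = B1⁻¹)
    (hA2 : A2 * A2 = 1) (h6 : A2⁻¹ * B2⁻¹ * A2 = B2)
    (hrel : B2⁻¹ * A2⁻¹ * B2 * A2 * (B1⁻¹ * A1⁻¹ * B1 * A1) = 1) :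
    ((B1*B2)*(B1*B2) = 1) ∧ ((B1*J)*(B1*J) = 1) ∧ ((B1*J*B1)*(B1*J*B1) = 1) ∧
    ((A2*B2)*(A2*B2) = 1) ∧ ((B1*J)*(B1*B2) = A1) ∧ ((B1*J)*(B1*J*B1) = B1) ∧
    (A2*(A2*B2) = B2) ∧
    ((B1*B2)*((B1*J)*((B1*J*B1)*((1:G)*(A2*(A2*B2))))) = 1) := by
  have hA2inv : A2⁻¹ = A2 := inv_eq_of_mul_eq_one_right hA2
  have hstep1 : B2 * A1⁻¹ * B2 = A1 := by
    have h' : (B2 * A1⁻¹ * B2) * A1⁻¹ = 1 := by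
      calc (B2 * A1⁻¹ * B2) * A1⁻¹ = (B2 * A1⁻¹) * (B2 * A1⁻¹) := by group
        _ = J * J := by rw [← hJ]
        _ = 1 := hJ2
    exact mul_inv_eq_one.mp h'
  have hc1 : A2⁻¹ * B2 * A2 = B2⁻¹ := by
    calc A2⁻¹ * B2 * A2 = (A2⁻¹ * B2⁻¹ * A2)⁻¹ := by group
      _ = B2⁻¹ := by rw [h6]
  have hconjB2 : A2 * B2 * A2 = B2⁻¹ := by
    have h' := hc1; rw [hA2inv] at h'; exact h'
  have hF2 : B2 * B2 = B1⁻¹ * A1⁻¹ * B1 * A1 := by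
    have h2 : B2⁻¹ * (A2⁻¹ * B2 * A2) * (B1⁻¹ * A1⁻¹ * B1 * A1) = 1 := by
      calc B2⁻¹ * (A2⁻¹ * B2 * A2) * (B1⁻¹ * A1⁻¹ * B1 * A1)
          = B2⁻¹ * A2⁻¹ * B2 * A2 * (B1⁻¹ * A1⁻¹ * B1 * A1) := by group
        _ = 1 := hrel
    rw [hc1] at h2
    calc B2 * B2 = B2 * B2 * (B2⁻¹ * B2⁻¹ * (B1⁻¹ * A1⁻¹ * B1 * A1)) := by
          rw [h2, mul_one]
      _ = B1⁻¹ * A1⁻¹ * B1 * A1 := by group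
  have hstep2 : A1 * B2⁻¹ = B2 * A1⁻¹ := by
    calc A1 * B2⁻¹ = (B2 * A1⁻¹ * B2) * B2⁻¹ := by rw [hstep1]
      _ = B2 * A1⁻¹ := by group
  have he5 : B1 * B2 = A1⁻¹ * B1 * (B2 * A1⁻¹) := by
    calc B1 * B2 = B1 * (B2 * B2) * B2⁻¹ := by group
      _ = B1 * (B1⁻¹ * A1⁻¹ * B1 * A1) * B2⁻¹ := by rw [hF2]
      _ = A1⁻¹ * B1 * (A1 * B2⁻¹) := by group
      _ = A1⁻¹ * B1 * (B2 * A1⁻¹) := by rw [hstep2]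
  have hF5 : B2 * B1 * B2 = B1⁻¹ := by
    have h' : B2 * (A1⁻¹ * B1 * (B2 * A1⁻¹)) = B1⁻¹ := by
      calc B2 * (A1⁻¹ * B1 * (B2 * A1⁻¹)) = (B2 * A1⁻¹) * B1 * (B2 * A1⁻¹) := by group
        _ = J * B1 * J := by rw [← hJ]
        _ = B1⁻¹ := hJBJ
    rw [← he5] at h'
    calc B2 * B1 * B2 = B2 * (B1 * B2) := by group
      _ = B1⁻¹ := h'
  have E1sq : (B1*B2)*(B1*B2) = 1 := by
    calc (B1*B2)*(B1*B2) = B1 * (B2*B1*B2) := by group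
      _ = B1 * B1⁻¹ := by rw [hF5]
      _ = 1 := by group
  have E2sq : (B1*J)*(B1*J) = 1 := by
    calc (B1*J)*(B1*J) = B1 * (J*B1*J) := by group
      _ = B1 * B1⁻¹ := by rw [hJBJ]
      _ = 1 := by group
  have hJBBJ : J * (B1*B1) * J = B1⁻¹ * B1⁻¹ := by
    have e : (J*B1*J) * (J*B1*J) = J * B1 * (J*J) * B1 * J := by group
    rw [hJ2] at e
    calc J * (B1*B1) * J = J * B1 * 1 * B1 * J := by group
      _ = (J*B1*J) * (J*B1*J) := e.symm
      _ = B1⁻¹ * B1⁻¹ := by rw [hJBJ]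
  have E3sq : (B1*J*B1)*(B1*J*B1) = 1 := by
    calc (B1*J*B1)*(B1*J*B1) = B1 * (J * (B1*B1) * J) * B1 := by group
      _ = B1 * (B1⁻¹ * B1⁻¹) * B1 := by rw [hJBBJ]
      _ = 1 := by group
  have E6sq : (A2*B2)*(A2*B2) = 1 := by
    calc (A2*B2)*(A2*B2) = (A2*B2*A2)*B2 := by group
      _ = B2⁻¹*B2 := by rw [hconjB2]
      _ = 1 := by group
  have E2E1 : (B1*J)*(B1*B2) = A1 := by
    have e : B1 * (J*B1*J) * (J*B2) = B1*J*B1*((J*J)*B2) := by group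
    rw [hJ2] at e
    calc (B1*J)*(B1*B2) = B1*J*B1*(1*B2) := by group
      _ = B1 * (J*B1*J) * (J*B2) := e.symm
      _ = B1 * B1⁻¹ * (J*B2) := by rw [hJBJ]
      _ = J * B2 := by group
      _ = B2 * A1⁻¹ * B2 := by rw [hJ]
      _ = A1 := hstep1
  have E2E3 : (B1*J)*(B1*J*B1) = B1 := by
    calc (B1*J)*(B1*J*B1) = B1 * (J*B1*J) * B1 := by group
      _ = B1 * B1⁻¹ * B1 := by rw [hJBJ]
      _ = B1 := by group
  have E5E6 : A2*(A2*B2) = B2 := by rw [← mul_assoc, hA2, one_mul]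
  refine ⟨E1sq, E2sq, E3sq, E6sq, E2E1, E2E3, E5E6, ?_⟩
  rw [E5E6, one_mul]
  calc (B1*B2)*((B1*J)*((B1*J*B1)*B2)) = (B1*B2)*(((B1*J)*(B1*J*B1))*B2) := by group
    _ = (B1*B2)*(B1*B2) := by rw [E2E3]
    _ = 1 := E1sq

lemma rel_psl (ρ : Gamma2 →* PSL2C) :
    (ρ b2)⁻¹ * (ρ a2)⁻¹ * ρ b2 * ρ a2 * ((ρ b1)⁻¹ * (ρ a1)⁻¹ * ρ b1 * ρ a1) = 1 := by
  have hmem : surfaceRel 2 ∈ ({surfaceRel 2} : Set (FreeGroup (Fin 2 × Bool))) := rfl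
  have h : (PresentedGroup.mk ({surfaceRel 2} : Set (FreeGroup (Fin 2 × Bool)))
      (surfaceRel 2) : Gamma2) = 1 :=
    (QuotientGroup.eq_one_iff _).mpr (Subgroup.subset_normalClosure hmem)
  have h3 : (PresentedGroup.mk ({surfaceRel 2} : Set (FreeGroup (Fin 2 × Bool)))
      (commF (FreeGroup.of ((1 : Fin 2), false)) (FreeGroup.of ((1 : Fin 2), true)) *
       commF (FreeGroup.of ((0 : Fin 2), false)) (FreeGroup.of ((0 : Fin 2), true)))) = 1 := by
    rw [← surfaceRel_two]; exact h
  have h2 := congrArg ρ h3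
  rw [_root_.map_one] at h2
  simp only [commF, _root_.map_mul, _root_.map_inv] at h2
  exact h2

end Helpers

/-- the characterization of pentagon representations in special form. -/
theorem statement3 (ρ : Gamma2 →* PSL2C) (hne : IsNonElem ρ)
    (h1 : IsLoxodromic (ρ a1)) (h2 : IsLoxodromic (ρ b1))
    (h3 : ¬ IsElementarySubgroup (Subgroup.closure {ρ a1, ρ b1}))
    (h4 : ¬ SendsFixedToOther (ρ a1) (ρ b1))
    (h5 : IsLoxodromic (ρ b2))
    (h6 : (ρ a2)⁻¹ * (ρ b2)⁻¹ * ρ a2 = ρ b2)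
    (h7 : InterchangesFixed (ρ (b2 * a1⁻¹)) (ρ b1)) :
    ∃ ρ' : GammaP →* PSL2C, ρ'.comp iota = ρ ∧ ∃! i : Fin 6, ρ' (qgen i) = 1 := by
  obtain ⟨p, q, hpq, hfp, hfq, hJp0, hJq0⟩ := h7
  have hJmap : ρ (b2 * a1⁻¹) = ρ b2 * (ρ a1)⁻¹ := by
    rw [_root_.map_mul, _root_.map_inv]
  rw [hJmap] at hJp0 hJq0
  obtain ⟨hJ2, hJBJ⟩ := swap_fix hpq hfp hfq hJp0 hJq0
  have hA2sq : ρ a2 * ρ a2 = 1 := conj_inv_sq h5 h6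
  have hrel := rel_psl ρ
  obtain ⟨E1sq, E2sq, E3sq, E6sq, E2E1, E2E3, E5E6, hprod⟩ :=
    pentagon_alg (ρ a1) (ρ b1) (ρ a2) (ρ b2) (ρ b2 * (ρ a1)⁻¹) rfl hJ2 hJBJ hA2sq h6 hrel
  set f : Fin 6 → PSL2C :=
    ![ρ b1 * ρ b2, ρ b1 * (ρ b2 * (ρ a1)⁻¹), ρ b1 * (ρ b2 * (ρ a1)⁻¹) * ρ b1, 1,
      ρ a2, ρ a2 * ρ b2] with hfdef
  have hf0 : f 0 = ρ b1 * ρ b2 := rfl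
  have hf1 : f 1 = ρ b1 * (ρ b2 * (ρ a1)⁻¹) := rfl
  have hf2 : f 2 = ρ b1 * (ρ b2 * (ρ a1)⁻¹) * ρ b1 := rfl
  have hf3 : f 3 = 1 := rfl
  have hf4 : f 4 = ρ a2 := rfl
  have hf5 : f 5 = ρ a2 * ρ b2 := rfl
  have hrels : ∀ r ∈ pentagonRels, (FreeGroup.lift f) r = 1 := by
    rintro r (⟨i, rfl⟩ | hr)
    · rw [_root_.map_mul, FreeGroup.lift_apply_of]
      fin_cases i
      · exact E1sq
      · exact E2sq
      · exact E3sq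
      · exact mul_one 1
      · exact hA2sq
      · exact E6sq
    · rw [Set.mem_singleton_iff] at hr; subst hr
      have h6' : List.finRange 6 = [0, 1, 2, 3, 4, 5] := by decide
      rw [h6']
      simp only [List.map_cons, List.map_nil, List.prod_cons, List.prod_nil, _root_.map_mul,
        _root_.map_one, FreeGroup.lift_apply_of, mul_one]
      exact hprod
  refine ⟨PresentedGroup.toGroup hrels, ?_, ?_⟩
  · apply PresentedGroup.ext
    rintro ⟨i, b⟩
    rw [MonoidHom.comp_apply]
    have hiota : ∀ x : Fin 2 × Bool, iota (PresentedGroup.of x) = pentMap x :=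
      fun x => PresentedGroup.toGroup.of _
    have hq : ∀ j : Fin 6, PresentedGroup.toGroup hrels (qgen j) = f j :=
      fun j => PresentedGroup.toGroup.of _
    fin_cases i <;> cases b
    · -- a1
      rw [hiota]
      show PresentedGroup.toGroup hrels (qgen 1 * qgen 0) = ρ a1
      rw [_root_.map_mul, hq, hq, hf1, hf0]
      exact E2E1
    · -- b1
      rw [hiota]
      show PresentedGroup.toGroup hrels (qgen 1 * qgen 2) = ρ b1
      rw [_root_.map_mul, hq, hq, hf1, hf2]
      exact E2E3
    · -- a2
      rw [hiota]
      show PresentedGroup.toGroup hrels (qgen 4 * qgen 3) = ρ a2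
      rw [_root_.map_mul, hq, hq, hf4, hf3, mul_one]
    · -- b2
      rw [hiota]
      show PresentedGroup.toGroup hrels (qgen 4 * qgen 5) = ρ b2
      rw [_root_.map_mul, hq, hq, hf4, hf5]
      exact E5E6
  · have hq : ∀ j : Fin 6, PresentedGroup.toGroup hrels (qgen j) = f j :=
      fun j => PresentedGroup.toGroup.of _
    refine ⟨3, (hq 3).trans hf3, ?_⟩
    intro j hj
    replace hj : PresentedGroup.toGroup hrels (qgen j) = 1 := hj
    rw [hq] at hj
    have hB1invp : pslAct (ρ b1)⁻¹ p = p := pslAct_inv_fixed hfp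
    have hB1invq : pslAct (ρ b1)⁻¹ q = q := pslAct_inv_fixed hfq
    fin_cases j
    · -- f 0 = 1 : ρ b1 * ρ b2 = 1
      exfalso
      replace hj : ρ b1 * ρ b2 = 1 := hj
      have hB2 : ρ b2 = (ρ b1)⁻¹ := eq_inv_of_mul_eq_one_right hj
      have hJinv : (ρ b2 * (ρ a1)⁻¹)⁻¹ = ρ b2 * (ρ a1)⁻¹ :=
        inv_eq_of_mul_eq_one_right hJ2
      have hA1 : ρ a1 = (ρ b2 * (ρ a1)⁻¹) * (ρ b1)⁻¹ := by
        rw [← hJinv, ← hB2]; group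
      have : pslAct (ρ a1) q = p := by
        rw [hA1, pslAct_mul, hB1invq]
        exact hJq0
      exact h4 ⟨p, q, hpq, hfp, hfq, Or.inr this⟩
    · -- f 1 = 1
      exfalso
      replace hj : ρ b1 * (ρ b2 * (ρ a1)⁻¹) = 1 := hj
      have hJeq : ρ b2 * (ρ a1)⁻¹ = (ρ b1)⁻¹ := eq_inv_of_mul_eq_one_right hj
      rw [hJeq, hB1invp] at hJp0
      exact hpq hJp0
    · -- f 2 = 1
      exfalso
      replace hj : ρ b1 * (ρ b2 * (ρ a1)⁻¹) * ρ b1 = 1 := hj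
      have hJeq : ρ b2 * (ρ a1)⁻¹ = (ρ b1)⁻¹ * (ρ b1)⁻¹ := by
        calc ρ b2 * (ρ a1)⁻¹
            = (ρ b1)⁻¹ * (ρ b1 * (ρ b2 * (ρ a1)⁻¹) * ρ b1) * (ρ b1)⁻¹ := by group
          _ = (ρ b1)⁻¹ * 1 * (ρ b1)⁻¹ := by rw [hj]
          _ = (ρ b1)⁻¹ * (ρ b1)⁻¹ := by group
      rw [hJeq, pslAct_mul, hB1invp, hB1invp] at hJp0
      exact hpq hJp0
    · rfl
    · -- f 4 = 1 : ρ a2 = 1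
      exfalso
      replace hj : ρ a2 = 1 := hj
      have h6' := h6
      rw [hj] at h6'
      simp only [inv_one, one_mul, mul_one] at h6'
      have hsq : ρ b2 * ρ b2 = 1 := mul_eq_one_iff_inv_eq.mpr h6'
      exact not_lox_of_sq_eq_one hsq h5
    · -- f 5 = 1 : ρ a2 * ρ b2 = 1
      exfalso
      replace hj : ρ a2 * ρ b2 = 1 := hj
      have hB2 : ρ b2 = (ρ a2)⁻¹ := eq_inv_of_mul_eq_one_right hj
      have hsq : ρ b2 * ρ b2 = 1 := by
        rw [hB2, ← _root_.mul_inv_rev, hA2sq, inv_one]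
      exact not_lox_of_sq_eq_one hsq h5
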